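/- With the notation of the tensor construction below, the following are equivalent: (i) for every λ ∈ k, R(λ) ∘ R'(λ) = id and R'(λ) ∘ R(λ) = id on L̃ ⊗ L̃; (ii) β ∘ S = −β as maps L ⊗ L → L. -/

import Mathlib

open TensorProduct

variable (k : Type*) [CommRing k] (M : Type*) [AddCommGroup M] [Module k M]

/-- The distinguished element `e = (0,1)` of `M̃ = M ⊕ k`. -/
def ee : M × k := (0, 1)

/-- `R(λ) : M̃⊗M̃ → M̃⊗M̃`, `R(λ)(u⊗v) = S̃(u⊗v) + ι β(pu ⊗ pv) ⊗ λe`, built from the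
extension `St` of the presymmetry and a bracket `β`. -/
noncomputable def Rmap (St : ((M × k) ⊗[k] (M × k)) →ₗ[k] ((M × k) ⊗[k] (M × k)))
    (β : (M ⊗[k] M) →ₗ[k] M) (lam : k) :
    ((M × k) ⊗[k] (M × k)) →ₗ[k] ((M × k) ⊗[k] (M × k)) :=
  St + ((TensorProduct.mk k (M × k) (M × k)).flip (lam • ee k M)).comp
    ((LinearMap.inl k M k).comp
      (β.comp (TensorProduct.map (LinearMap.fst k M k) (LinearMap.fst k M k))))

/-- `R'(λ) : M̃⊗M̃ → M̃⊗M̃`, `R'(λ)(u⊗v) = S̃(u⊗v) + λe ⊗ ι β(pu ⊗ pv)`. -/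
noncomputable def Rmap' (St : ((M × k) ⊗[k] (M × k)) →ₗ[k] ((M × k) ⊗[k] (M × k)))
    (β : (M ⊗[k] M) →ₗ[k] M) (lam : k) :
    ((M × k) ⊗[k] (M × k)) →ₗ[k] ((M × k) ⊗[k] (M × k)) :=
  St + ((TensorProduct.mk k (M × k) (M × k)) (lam • ee k M)).comp
    ((LinearMap.inl k M k).comp
      (β.comp (TensorProduct.map (LinearMap.fst k M k) (LinearMap.fst k M k))))

/-- `f ⊗ 1` acting on the first two factors of `(M⊗M)⊗M`. -/
noncomputable def tensorOne (f : (M ⊗[k] M) →ₗ[k] (M ⊗[k] M)) :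
    ((M ⊗[k] M) ⊗[k] M) →ₗ[k] ((M ⊗[k] M) ⊗[k] M) :=
  TensorProduct.map f LinearMap.id

/-- `1 ⊗ f` acting on the last two factors of `(M⊗M)⊗M`. -/
noncomputable def oneTensor (f : (M ⊗[k] M) →ₗ[k] (M ⊗[k] M)) :
    ((M ⊗[k] M) ⊗[k] M) →ₗ[k] ((M ⊗[k] M) ⊗[k] M) :=
  (TensorProduct.assoc k M M M).symm.toLinearMap ∘ₗ
    (TensorProduct.map LinearMap.id f) ∘ₗ (TensorProduct.assoc k M M M).toLinearMap

/-- `β ⊗ 1 : (M⊗M)⊗M → M⊗M`. -/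
noncomputable def betaOne (β : (M ⊗[k] M) →ₗ[k] M) :
    ((M ⊗[k] M) ⊗[k] M) →ₗ[k] (M ⊗[k] M) :=
  TensorProduct.map β LinearMap.id

/-- `1 ⊗ β : (M⊗M)⊗M → M⊗M` (after reassociating). -/
noncomputable def oneBeta (β : (M ⊗[k] M) →ₗ[k] M) :
    ((M ⊗[k] M) ⊗[k] M) →ₗ[k] (M ⊗[k] M) :=
  (TensorProduct.map LinearMap.id β) ∘ₗ (TensorProduct.assoc k M M M).toLinearMap

/-- `ι ⊗ ι ⊗ ι : (M⊗M)⊗M → (M̃⊗M̃)⊗M̃`. -/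
noncomputable def iii : ((M ⊗[k] M) ⊗[k] M) →ₗ[k] (((M × k) ⊗[k] (M × k)) ⊗[k] (M × k)) :=
  TensorProduct.map (TensorProduct.map (LinearMap.inl k M k) (LinearMap.inl k M k))
    (LinearMap.inl k M k)


section Aux
variable {k : Type*} [CommRing k] {M : Type*} [AddCommGroup M] [Module k M]

lemma rmap_apply (St : ((M × k) ⊗[k] (M × k)) →ₗ[k] ((M × k) ⊗[k] (M × k)))
    (β : (M ⊗[k] M) →ₗ[k] M) (lam : k) (w : (M × k) ⊗[k] (M × k)) :
    Rmap k M St β lam w = St w +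
      (LinearMap.inl k M k (β (TensorProduct.map (LinearMap.fst k M k) (LinearMap.fst k M k) w)))
        ⊗ₜ[k] (lam • ee k M) := rfl

lemma rmap'_apply (St : ((M × k) ⊗[k] (M × k)) →ₗ[k] ((M × k) ⊗[k] (M × k)))
    (β : (M ⊗[k] M) →ₗ[k] M) (lam : k) (w : (M × k) ⊗[k] (M × k)) :
    Rmap' k M St β lam w = St w +
      (lam • ee k M) ⊗ₜ[k]
      (LinearMap.inl k M k (β (TensorProduct.map (LinearMap.fst k M k) (LinearMap.fst k M k) w)))
      := rfl

end Aux

/-- `R(λ)R'(λ) = R'(λ)R(λ) = 1` for every `λ` iff the bracket `β` satisfies the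
antisymmetry `β∘S = −β`. -/
theorem stmt10 {k : Type*} [CommRing k] {I : Type*}
    (q : I → I → kˣ) (hq : ∀ i j, q i j * q j i = 1)
    (S : ((I →₀ k) ⊗[k] (I →₀ k)) →ₗ[k] ((I →₀ k) ⊗[k] (I →₀ k)))
    (hS : ∀ i j : I, S (Finsupp.single i 1 ⊗ₜ[k] Finsupp.single j 1)
        = (q i j : k) • (Finsupp.single j (1 : k) ⊗ₜ[k] Finsupp.single i (1 : k)))
    (β : ((I →₀ k) ⊗[k] (I →₀ k)) →ₗ[k] (I →₀ k))
    (St : (((I →₀ k) × k) ⊗[k] ((I →₀ k) × k)) →ₗ[k] (((I →₀ k) × k) ⊗[k] ((I →₀ k) × k)))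
    (hSt1 : ∀ x y : I →₀ k,
      St ((LinearMap.inl k (I →₀ k) k x) ⊗ₜ[k] (LinearMap.inl k (I →₀ k) k y))
        = (TensorProduct.map (LinearMap.inl k (I →₀ k) k) (LinearMap.inl k (I →₀ k) k))
            (S (x ⊗ₜ[k] y)))
    (hSt2 : ∀ x : I →₀ k,
      St ((LinearMap.inl k (I →₀ k) k x) ⊗ₜ[k] ee k (I →₀ k))
        = ee k (I →₀ k) ⊗ₜ[k] (LinearMap.inl k (I →₀ k) k x))
    (hSt3 : ∀ x : I →₀ k,
      St (ee k (I →₀ k) ⊗ₜ[k] (LinearMap.inl k (I →₀ k) k x))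
        = (LinearMap.inl k (I →₀ k) k x) ⊗ₜ[k] ee k (I →₀ k))
    (hSt4 : St (ee k (I →₀ k) ⊗ₜ[k] ee k (I →₀ k)) = ee k (I →₀ k) ⊗ₜ[k] ee k (I →₀ k)) :
    (∀ lam : k,
        (Rmap k (I →₀ k) St β lam) ∘ₗ (Rmap' k (I →₀ k) St β lam) = LinearMap.id ∧
        (Rmap' k (I →₀ k) St β lam) ∘ₗ (Rmap k (I →₀ k) St β lam) = LinearMap.id)
      ↔ β ∘ₗ S = -β := by
  classical
  have hSS : ∀ t, S (S t) = t := by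
    have h : S ∘ₗ S = LinearMap.id := by
      apply Module.Basis.ext (Module.Basis.tensorProduct (Finsupp.basisSingleOne) (Finsupp.basisSingleOne))
      rintro ⟨i, j⟩
      rw [Module.Basis.tensorProduct_apply]
      simp only [Finsupp.coe_basisSingleOne]
      rw [LinearMap.comp_apply, hS, map_smul, hS, LinearMap.id_apply, smul_smul,
        ← Units.val_mul, hq, Units.val_one, one_smul]
    exact fun t => LinearMap.congr_fun h t
  have hPII : ∀ t : (I →₀ k) ⊗[k] (I →₀ k),
      TensorProduct.map (LinearMap.fst k (I →₀ k) k) (LinearMap.fst k (I →₀ k) k)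
        (TensorProduct.map (LinearMap.inl k (I →₀ k) k) (LinearMap.inl k (I →₀ k) k) t) = t := by
    intro t
    have h : (TensorProduct.map (LinearMap.fst k (I →₀ k) k) (LinearMap.fst k (I →₀ k) k)) ∘ₗ
        (TensorProduct.map (LinearMap.inl k (I →₀ k) k) (LinearMap.inl k (I →₀ k) k))
        = LinearMap.id := by
      rw [← TensorProduct.map_comp, LinearMap.fst_comp_inl, TensorProduct.map_id]
    exact LinearMap.congr_fun h t
  have hStII : ∀ t, St (TensorProduct.map (LinearMap.inl k (I →₀ k) k)
        (LinearMap.inl k (I →₀ k) k) t)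
      = TensorProduct.map (LinearMap.inl k (I →₀ k) k) (LinearMap.inl k (I →₀ k) k) (S t) := by
    intro t
    have h : St ∘ₗ (TensorProduct.map (LinearMap.inl k (I →₀ k) k) (LinearMap.inl k (I →₀ k) k))
        = (TensorProduct.map (LinearMap.inl k (I →₀ k) k) (LinearMap.inl k (I →₀ k) k)) ∘ₗ S := by
      apply TensorProduct.ext'
      intro x y
      simp only [LinearMap.comp_apply, TensorProduct.map_tmul]
      exact hSt1 x y
    exact LinearMap.congr_fun h t
  have hR_II : ∀ (lam : k) t,
      Rmap k (I →₀ k) St β lam (TensorProduct.map (LinearMap.inl k (I →₀ k) k)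
          (LinearMap.inl k (I →₀ k) k) t)
        = TensorProduct.map (LinearMap.inl k (I →₀ k) k) (LinearMap.inl k (I →₀ k) k) (S t)
          + lam • ((LinearMap.inl k (I →₀ k) k (β t)) ⊗ₜ[k] ee k (I →₀ k)) := by
    intro lam t
    rw [rmap_apply, hStII, hPII, tmul_smul]
  have hR'_II : ∀ (lam : k) t,
      Rmap' k (I →₀ k) St β lam (TensorProduct.map (LinearMap.inl k (I →₀ k) k)
          (LinearMap.inl k (I →₀ k) k) t)
        = TensorProduct.map (LinearMap.inl k (I →₀ k) k) (LinearMap.inl k (I →₀ k) k) (S t)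
          + lam • (ee k (I →₀ k) ⊗ₜ[k] (LinearMap.inl k (I →₀ k) k (β t))) := by
    intro lam t
    rw [rmap'_apply, hStII, hPII, smul_tmul']
  have hRg1 : ∀ (lam : k) (x y : I →₀ k),
      Rmap k (I →₀ k) St β lam (LinearMap.inl k (I →₀ k) k x ⊗ₜ[k] LinearMap.inl k (I →₀ k) k y)
        = TensorProduct.map (LinearMap.inl k (I →₀ k) k) (LinearMap.inl k (I →₀ k) k)
            (S (x ⊗ₜ[k] y))
          + lam • ((LinearMap.inl k (I →₀ k) k (β (x ⊗ₜ[k] y))) ⊗ₜ[k] ee k (I →₀ k)) := by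
    intro lam x y
    have h5 := hR_II lam (x ⊗ₜ[k] y)
    rw [TensorProduct.map_tmul] at h5
    exact h5
  have hR'g1 : ∀ (lam : k) (x y : I →₀ k),
      Rmap' k (I →₀ k) St β lam (LinearMap.inl k (I →₀ k) k x ⊗ₜ[k] LinearMap.inl k (I →₀ k) k y)
        = TensorProduct.map (LinearMap.inl k (I →₀ k) k) (LinearMap.inl k (I →₀ k) k)
            (S (x ⊗ₜ[k] y))
          + lam • (ee k (I →₀ k) ⊗ₜ[k] (LinearMap.inl k (I →₀ k) k (β (x ⊗ₜ[k] y)))) := by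
    intro lam x y
    have h5 := hR'_II lam (x ⊗ₜ[k] y)
    rw [TensorProduct.map_tmul] at h5
    exact h5
  have hRg2 : ∀ (lam : k) (x : I →₀ k),
      Rmap k (I →₀ k) St β lam (LinearMap.inl k (I →₀ k) k x ⊗ₜ[k] ee k (I →₀ k))
        = ee k (I →₀ k) ⊗ₜ[k] LinearMap.inl k (I →₀ k) k x := by
    intro lam x
    rw [rmap_apply, hSt2]
    simp [ee, Prod.mk_zero_zero]
  have hRg3 : ∀ (lam : k) (x : I →₀ k),
      Rmap k (I →₀ k) St β lam (ee k (I →₀ k) ⊗ₜ[k] LinearMap.inl k (I →₀ k) k x)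
        = LinearMap.inl k (I →₀ k) k x ⊗ₜ[k] ee k (I →₀ k) := by
    intro lam x
    rw [rmap_apply, hSt3]
    simp [ee, Prod.mk_zero_zero]
  have hRg4 : ∀ (lam : k),
      Rmap k (I →₀ k) St β lam (ee k (I →₀ k) ⊗ₜ[k] ee k (I →₀ k))
        = ee k (I →₀ k) ⊗ₜ[k] ee k (I →₀ k) := by
    intro lam
    rw [rmap_apply, hSt4]
    simp [ee, Prod.mk_zero_zero]
  have hR'g2 : ∀ (lam : k) (x : I →₀ k),
      Rmap' k (I →₀ k) St β lam (LinearMap.inl k (I →₀ k) k x ⊗ₜ[k] ee k (I →₀ k))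
        = ee k (I →₀ k) ⊗ₜ[k] LinearMap.inl k (I →₀ k) k x := by
    intro lam x
    rw [rmap'_apply, hSt2]
    simp [ee, Prod.mk_zero_zero]
  have hR'g3 : ∀ (lam : k) (x : I →₀ k),
      Rmap' k (I →₀ k) St β lam (ee k (I →₀ k) ⊗ₜ[k] LinearMap.inl k (I →₀ k) k x)
        = LinearMap.inl k (I →₀ k) k x ⊗ₜ[k] ee k (I →₀ k) := by
    intro lam x
    rw [rmap'_apply, hSt3]
    simp [ee, Prod.mk_zero_zero]
  have hR'g4 : ∀ (lam : k),
      Rmap' k (I →₀ k) St β lam (ee k (I →₀ k) ⊗ₜ[k] ee k (I →₀ k))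
        = ee k (I →₀ k) ⊗ₜ[k] ee k (I →₀ k) := by
    intro lam
    rw [rmap'_apply, hSt4]
    simp [ee, Prod.mk_zero_zero]
  constructor
  · intro h
    have h1 := (h 1).1
    apply LinearMap.ext
    intro t
    have H := LinearMap.congr_fun h1 (TensorProduct.map (LinearMap.inl k (I →₀ k) k)
      (LinearMap.inl k (I →₀ k) k) t)
    rw [LinearMap.comp_apply, LinearMap.id_apply, hR'_II 1 t, map_add, hR_II, map_smul,
      hRg3, hSS, one_smul, one_smul] at H
    set G : ((((I →₀ k) × k) ⊗[k] ((I →₀ k) × k))) →ₗ[k] (I →₀ k) :=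
      (TensorProduct.rid k (I →₀ k)).toLinearMap ∘ₗ
        (TensorProduct.map (LinearMap.fst k (I →₀ k) k) (LinearMap.snd k (I →₀ k) k)) with hG
    have hGII : ∀ s : (I →₀ k) ⊗[k] (I →₀ k),
        G ((TensorProduct.map (LinearMap.inl k (I →₀ k) k) (LinearMap.inl k (I →₀ k) k)) s)
          = 0 := by
      intro s
      have h6 : G ∘ₗ
          (TensorProduct.map (LinearMap.inl k (I →₀ k) k) (LinearMap.inl k (I →₀ k) k)) = 0 := by
        rw [hG, LinearMap.comp_assoc, ← TensorProduct.map_comp, LinearMap.snd_comp_inl,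
          TensorProduct.map_zero_right, LinearMap.comp_zero]
      exact LinearMap.congr_fun h6 s
    have hGg : ∀ z : I →₀ k,
        G ((LinearMap.inl k (I →₀ k) k z) ⊗ₜ[k] ee k (I →₀ k)) = z := by
      intro z
      simp [hG, ee]
    have h3 := congrArg G H
    rw [map_add, map_add, hGII, hGg, hGg, zero_add] at h3
    have hz : β (S t) + β t = 0 := h3
    simp only [LinearMap.comp_apply, LinearMap.neg_apply]
    exact eq_neg_of_add_eq_zero_left hz
  · intro hb lam
    have hβ' : ∀ t, β (S t) = -β t := by
      intro t
      have h4 := LinearMap.congr_fun hb t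
      simpa using h4
    have hdec : ∀ u : (I →₀ k) × k,
        u = LinearMap.inl k (I →₀ k) k u.1 + u.2 • ee k (I →₀ k) := by
      rintro ⟨x, a⟩
      simp [ee, Prod.ext_iff]
    have h7 : ∀ (A w : ((I →₀ k) × k) ⊗[k] ((I →₀ k) × k)) (c : k),
        A + c • -w + c • w = A := by
      intro A w c
      module
    constructor
    · apply TensorProduct.ext'
      intro u v
      rw [LinearMap.comp_apply, LinearMap.id_apply]
      rw [hdec u, hdec v]
      simp only [add_tmul, tmul_add, tmul_smul, map_add, map_smul,
        hR'g1, hR'g2, hR'g3, hR'g4, hRg1, hRg2, hRg3, hRg4, hR_II, hR'_II, hSS, hβ',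
        TensorProduct.map_tmul, map_neg, neg_tmul, tmul_neg, smul_neg, ← smul_tmul', h7]
    · apply TensorProduct.ext'
      intro u v
      rw [LinearMap.comp_apply, LinearMap.id_apply]
      rw [hdec u, hdec v]
      simp only [add_tmul, tmul_add, tmul_smul, map_add, map_smul,
        hR'g1, hR'g2, hR'g3, hR'g4, hRg1, hRg2, hRg3, hRg4, hR_II, hR'_II, hSS, hβ',
        TensorProduct.map_tmul, map_neg, neg_tmul, tmul_neg, smul_neg, ← smul_tmul', h7]
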